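/- Let S be a nonempty string and let b = lrs(S). Let i be the second rightmost starting position of an occurrence of b in S, under the convention that the empty string occurs starting at every position 1, …, |S|+1 (so the rightmost occurrence of b starts at position |S| − |b| + 1, and i < |S| − |b| + 1; such i exists). Then the longest closed suffix of S equals S[i..|S|], and b is the longest border of S[i..|S|]. -/

import Mathlib

open List

variable {α : Type*}

/-- `w` occurs in `S` starting at (1-indexed) position `a`. -/
def Occ (S w : List α) (a : ℕ) : Prop :=
  1 ≤ a ∧ a + w.length ≤ S.length + 1 ∧ (S.drop (a - 1)).take w.length = w

/-- `w` is a repeating suffix of `S`: a suffix of `S` that is a substring of `S[1..|S|-1]`. -/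
def RepSuffix (S w : List α) : Prop := w <:+ S ∧ w <:+: S.dropLast

/-- `w` is a repeating prefix of `S`: a prefix of `S` that is a substring of `S[2..|S|]`. -/
def RepPrefix (S w : List α) : Prop := w <+: S ∧ w <:+: S.tail

/-- Length of the longest repeating suffix of `S`. -/
def lrsLen [DecidableEq α] (S : List α) : ℕ :=
  Nat.findGreatest (fun l => S.drop (S.length - l) <:+: S.dropLast) S.length

/-- The longest repeating suffix of `S` (empty if none is nonempty). -/
def lrs [DecidableEq α] (S : List α) : List α := S.drop (S.length - lrsLen S)

/-- Length of the longest repeating prefix of `S`. -/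
def lrpLen [DecidableEq α] (S : List α) : ℕ :=
  Nat.findGreatest (fun l => S.take l <:+: S.tail) S.length

/-- The longest repeating prefix of `S` (empty if none is nonempty). -/
def lrp [DecidableEq α] (S : List α) : List α := S.take (lrpLen S)

/-- `p ≥ 1` is a period of `w`: `w[x] = w[x+p]` for all `1 ≤ x ≤ |w| - p` (1-indexed). -/
def IsPeriod (w : List α) (p : ℕ) : Prop :=
  1 ≤ p ∧ ∀ x, 1 ≤ x → x + p ≤ w.length → w[x - 1]? = w[x + p - 1]?

/-- `b` is a border of `w`: a proper prefix and proper suffix of `w`. -/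
def IsBorder (w b : List α) : Prop := b <+: w ∧ b <:+ w ∧ b.length < w.length

/-- `b` is the longest border of `w`. -/
def IsLongestBorder (w b : List α) : Prop :=
  IsBorder w b ∧ ∀ b', IsBorder w b' → b'.length ≤ b.length

/-- `w` is closed: `|w| ≤ 1`, or the longest border of `w` occurs exactly twice in `w`,
namely only as a prefix and as a suffix. -/
def ClosedWord (w : List α) : Prop :=
  w.length ≤ 1 ∨
    ∃ b, IsLongestBorder w b ∧ ∀ a, Occ w b a → a = 1 ∨ a = w.length - b.length + 1


lemma my_occ_of_infix {S w : List α} (h : w <:+: S) : ∃ a, Occ S w a := by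
  obtain ⟨u, v, rfl⟩ := h
  refine ⟨u.length + 1, by omega, ?_, ?_⟩
  · simp; omega
  · simp only [Nat.add_sub_cancel, List.append_assoc, List.drop_left, List.take_left]

lemma my_occ_drop_up {S w : List α} {a d : ℕ} (h : Occ (S.drop d) w a) (hd : d ≤ S.length) :
    Occ S w (a + d) := by
  obtain ⟨h1, h2, h3⟩ := h
  rw [List.length_drop] at h2
  refine ⟨by omega, by omega, ?_⟩
  rw [List.drop_drop] at h3
  have : a + d - 1 = d + (a - 1) := by omega
  rw [this]; exact h3

lemma my_occ_dropLast_lift {S w : List α} {a : ℕ} (hS : S ≠ []) (h : Occ S.dropLast w a) :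
    Occ S w a ∧ a + w.length ≤ S.length := by
  obtain ⟨h1, h2, h3⟩ := h
  have hn : 1 ≤ S.length := by
    cases S with | nil => exact absurd rfl hS | cons x xs => simp
  rw [List.length_dropLast] at h2
  have hle : a + w.length ≤ S.length := by omega
  rw [List.dropLast_eq_take, List.drop_take, List.take_take,
    min_eq_left (by omega : w.length ≤ S.length - 1 - (a - 1))] at h3
  exact ⟨⟨h1, by omega, h3⟩, hle⟩

lemma my_occ_infix_dropLast {S w : List α} {a : ℕ} (h : Occ S w a)
    (hle : a + w.length ≤ S.length) : w <:+: S.dropLast := by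
  obtain ⟨h1, h2, h3⟩ := h
  have key : w <:+ S.take (a - 1 + w.length) := by
    have heq : w = (S.take (a - 1 + w.length)).drop (a - 1) := by
      rw [List.drop_take]
      have : a - 1 + w.length - (a - 1) = w.length := by omega
      rw [this, h3]
    conv_lhs => rw [heq]
    exact List.drop_suffix _ _
  have hpre : S.take (a - 1 + w.length) <+: S.take (S.length - 1) :=
    List.take_prefix_take_left (by omega)
  rw [List.dropLast_eq_take]
  exact key.isInfix.trans hpre.isInfix

lemma my_suffix_of_suffix_le {x y S : List α} (hx : x <:+ S) (hy : y <:+ S)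
    (h : x.length ≤ y.length) : x <:+ y := by
  have hxl := hx.length_le
  have hyl := hy.length_le
  rw [List.suffix_iff_eq_drop] at hx hy
  rw [List.suffix_iff_eq_drop, hy, List.drop_drop]
  rw [List.length_drop]
  have : S.length - y.length + (S.length - (S.length - y.length) - x.length)
      = S.length - x.length := by omega
  rw [this, ← hx]

section L
variable [DecidableEq α]

lemma my_lrsLen_le (S : List α) : lrsLen S ≤ S.length := Nat.findGreatest_le _

lemma my_lrs_length (S : List α) : (lrs S).length = lrsLen S := by
  rw [lrs, List.length_drop]
  have := my_lrsLen_le S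
  omega

lemma my_lrs_suffix (S : List α) : lrs S <:+ S := List.drop_suffix _ _

lemma my_lrs_infix (S : List α) : lrs S <:+: S.dropLast := by
  rw [lrs, lrsLen]
  exact Nat.findGreatest_spec (P := fun l => S.drop (S.length - l) <:+: S.dropLast)
    (Nat.zero_le S.length) (by simp)

lemma my_le_lrsLen (S : List α) {l : ℕ} (hl : l ≤ S.length)
    (h : S.drop (S.length - l) <:+: S.dropLast) : l ≤ lrsLen S :=
  Nat.le_findGreatest hl h

end L

/-- For nonempty `S` with `b = lrs S` (under the convention that the empty
string occurs at every position `1, …, |S|+1`), an occurrence position of `b` strictly below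
the rightmost one `|S| - |b| + 1` exists, and if `i` is the largest such (the second rightmost
occurrence), then the longest closed suffix of `S` equals `S[i..|S|]` and `b` is the longest
border of `S[i..|S|]`. -/
theorem longest_closed_suffix_via_lrs [DecidableEq α] (S : List α) (hS : S ≠ []) :
    (∃ j, Occ S (lrs S) j ∧ j < S.length - (lrs S).length + 1) ∧
    (∀ i, Occ S (lrs S) i → i < S.length - (lrs S).length + 1 →
      (∀ a, Occ S (lrs S) a → a < S.length - (lrs S).length + 1 → a ≤ i) →
      (ClosedWord (S.drop (i - 1)) ∧ S.drop (i - 1) <:+ S ∧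
        (∀ t, ClosedWord t → t <:+ S → t.length ≤ (S.drop (i - 1)).length)) ∧
      IsLongestBorder (S.drop (i - 1)) (lrs S)) := by
  have hn : 1 ≤ S.length := List.length_pos_iff.mpr hS
  have hL : lrsLen S ≤ S.length := my_lrsLen_le S
  have hlen : (lrs S).length = lrsLen S := my_lrs_length S
  constructor
  · obtain ⟨a, ha⟩ := my_occ_of_infix (my_lrs_infix S)
    obtain ⟨hocc, hend⟩ := my_occ_dropLast_lift hS ha
    exact ⟨a, hocc, by omega⟩
  · intro i hi hilt hmax
    have hi1 : 1 ≤ i := hi.1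
    have hiL : i + lrsLen S ≤ S.length := by omega
    -- b = lrs S is a border of T = S.drop (i-1)
    have hbpre : lrs S <+: S.drop (i - 1) := by
      rw [List.prefix_iff_eq_take]
      exact hi.2.2.symm
    have hbsuf : lrs S <:+ S.drop (i - 1) :=
      my_suffix_of_suffix_le (my_lrs_suffix S) (List.drop_suffix _ _)
        (by rw [hlen, List.length_drop]; omega)
    have hblt : (lrs S).length < (S.drop (i - 1)).length := by
      rw [hlen, List.length_drop]; omega
    have hlongest : ∀ b', IsBorder (S.drop (i - 1)) b' → b'.length ≤ (lrs S).length := by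
      intro b' hb'
      obtain ⟨hp, hs, hlt⟩ := hb'
      rw [hlen]
      by_contra hgt
      push_neg at hgt
      rw [List.length_drop] at hlt
      have hb'S : b' <:+ S := hs.trans (List.drop_suffix _ _)
      have hocc : Occ S b' i :=
        ⟨hi1, by omega, (List.prefix_iff_eq_take.mp hp).symm⟩
      have hinf : b' <:+: S.dropLast := my_occ_infix_dropLast hocc (by omega)
      have : b'.length ≤ lrsLen S := by
        apply my_le_lrsLen S hb'S.length_le
        rwa [← List.suffix_iff_eq_drop.mp hb'S]
      omega
    have hLB : IsLongestBorder (S.drop (i - 1)) (lrs S) :=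
      ⟨⟨hbpre, hbsuf, hblt⟩, hlongest⟩
    have hclosed : ClosedWord (S.drop (i - 1)) := by
      right
      refine ⟨lrs S, hLB, ?_⟩
      intro a ha
      obtain ⟨ha1, ha2, ha3⟩ := ha
      by_cases h1 : a = 1
      · left; exact h1
      · right
        have ha2' : 2 ≤ a := by omega
        have hocc : Occ S (lrs S) (a + (i - 1)) :=
          my_occ_drop_up ⟨ha1, ha2, ha3⟩ (by omega)
        have hposlt : ¬ (a + (i - 1) < S.length - (lrs S).length + 1) := by
          intro hlt'
          have := hmax _ hocc hlt'
          omega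
        have hub := hocc.2.1
        rw [List.length_drop] at ha2 ⊢
        omega
    have hmaximal : ∀ t, ClosedWord t → t <:+ S → t.length ≤ (S.drop (i - 1)).length := by
      intro t htc hts
      by_contra hgt
      push_neg at hgt
      rw [List.length_drop] at hgt
      have htn := hts.length_le
      have ht2 : 2 ≤ t.length := by omega
      rcases htc with h1 | ⟨b', ⟨⟨hb'p, hb's, hb'lt⟩, _⟩, hboc⟩
      · omega
      have htd : t = S.drop (S.length - t.length) := List.suffix_iff_eq_drop.mp hts
      have hb'S : b' <:+ S := hb's.trans hts
      have hoccS : Occ S b' (S.length - t.length + 1) := by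
        refine ⟨by omega, by omega, ?_⟩
        have h0 : S.length - t.length + 1 - 1 = S.length - t.length := by omega
        rw [h0, ← htd]
        exact (List.prefix_iff_eq_take.mp hb'p).symm
      have hb'L : b'.length ≤ lrsLen S := by
        apply my_le_lrsLen S hb'S.length_le
        rw [← List.suffix_iff_eq_drop.mp hb'S]
        exact my_occ_infix_dropLast hoccS (by omega)
      have hb'b : b' <:+ lrs S :=
        my_suffix_of_suffix_le hb'S (my_lrs_suffix S) (by omega)
      obtain ⟨p, hpdef⟩ : ∃ p, p = i + lrsLen S + t.length - b'.length - S.length := ⟨_, rfl⟩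
      have hocct : Occ t b' p := by
        refine ⟨by omega, by omega, ?_⟩
        conv_lhs => rw [htd]
        rw [List.drop_drop]
        have hidx : S.length - t.length + (p - 1)
            = i - 1 + (lrsLen S - b'.length) := by omega
        rw [hidx, ← List.drop_drop]
        have h5 : List.take b'.length (List.drop (lrsLen S - b'.length) (S.drop (i - 1)))
            = List.drop (lrsLen S - b'.length) (List.take (lrsLen S) (S.drop (i - 1))) := by
          rw [List.drop_take]
          congr 1
          omega
        have hkey : (S.drop (i - 1)).take (lrsLen S) = lrs S := by
          rw [← hlen]; exact hi.2.2
        rw [h5, hkey]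
        have h6 : b' = (lrs S).drop ((lrs S).length - b'.length) :=
          List.suffix_iff_eq_drop.mp hb'b
        rw [hlen] at h6
        exact h6.symm
      rcases hboc p hocct with h1 | h2
      · omega
      · omega
    exact ⟨⟨hclosed, List.drop_suffix _ _, hmaximal⟩, hLB⟩
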